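/- Suppose η = −1 (put case). Then the value functions satisfy the scaling inequality v_k(γ∘x) ≤ γ v_k(x) + e^{−r t_k}(1−γ)K for every k ∈ {0,…,n}, every x ∈ C and every γ ∈ (0,1]. -/

import Mathlib

open MeasureTheory ProbabilityTheory

/-- The ambient space `ℝ^{d₁} × ℝ^{d₂} × ℝ^{d₃}` for the state `x = (s, y, z)`. -/
abbrev StateSpace (d₁ d₂ d₃ : ℕ) : Type :=
  (Fin d₁ → ℝ) × (Fin d₂ → ℝ) × (Fin d₃ → ℝ)

/-- Put case (`η = −1`): the value functions of the dynamic programming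
recursion `v_n = φ(n,·)`, `v_k(x) = max(φ(k,x), ∫ v_{k+1} dκ_k(x))`, with payoff
`φ(k,x) = e^{−r t_k}(η(α(x) − β(x) − K))⁺` (with `α, β` positively homogeneous of degree
one in `(s,z)` and the kernels scaling linearly), satisfy the scaling inequality
`v_k(γ∘x) ≤ γ v_k(x) + e^{−r t_k}(1−γ)K` for every `k ∈ {0,…,n}`, every `x ∈ C` and every
`γ ∈ (0,1]`, where `γ∘(s,y,z) = (γs, y, γz)`. -/
theorem stmt_8
    {d₁ d₂ d₃ : ℕ}
    (C : Set (StateSpace d₁ d₂ d₃)) (hCmeas : MeasurableSet C)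
    (scale : ℝ → StateSpace d₁ d₂ d₃ → StateSpace d₁ d₂ d₃)
    (hscale : ∀ γ x, scale γ x = (γ • x.1, x.2.1, γ • x.2.2))
    (hC : ∀ γ > (0 : ℝ), ∀ x ∈ C, scale γ x ∈ C)
    (n : ℕ) (hn : 1 ≤ n) (t : ℕ → ℝ) (ht : ∀ i < n, t i < t (i + 1))
    (a : ℝ) (ha : 0 < a)
    (La : Set (StateSpace d₁ d₂ d₃ → ℝ))
    (hLa : La = {ψ | ContinuousOn ψ C ∧
      ∃ c > 0, ∀ x ∈ C, |ψ x| ≤ c * (1 + ‖x‖ ^ a)})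
    (α β : StateSpace d₁ d₂ d₃ → ℝ)
    (hαc : ContinuousOn α C) (hαpos : ∀ x ∈ C, 0 < α x)
    (hαhom : ∀ γ > (0 : ℝ), ∀ x ∈ C, α (scale γ x) = γ * α x)
    (hβc : ContinuousOn β C) (hβnn : ∀ x ∈ C, 0 ≤ β x)
    (hβhom : ∀ γ > (0 : ℝ), ∀ x ∈ C, β (scale γ x) = γ * β x)
    (K r η : ℝ) (hK : 0 < K) (hr : 0 ≤ r) (hη : η = -1)
    (φ : ℕ → StateSpace d₁ d₂ d₃ → ℝ)
    (hφdef : ∀ k ≤ n, ∀ x ∈ C,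
      φ k x = Real.exp (-(r * t k)) * max (η * (α x - β x - K)) 0)
    (hφLa : ∀ k ≤ n, φ k ∈ La)
    (κ : ℕ → Kernel (StateSpace d₁ d₂ d₃) (StateSpace d₁ d₂ d₃))
    (hκ : ∀ k, IsMarkovKernel (κ k))
    (hκC : ∀ k < n, ∀ x ∈ C, (κ k) x Cᶜ = 0)
    (hgc : ∀ k < n, ∀ ψ ∈ La,
      (∀ x ∈ C, Integrable ψ ((κ k) x)) ∧
      (fun x => ∫ y, ψ y ∂((κ k) x)) ∈ La)
    (hκscale : ∀ k < n, ∀ γ > (0 : ℝ), ∀ x ∈ C,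
      Measure.map (scale γ) ((κ k) x) = (κ k) (scale γ x))
    (v : ℕ → StateSpace d₁ d₂ d₃ → ℝ)
    (hvn : ∀ x ∈ C, v n x = φ n x)
    (hv : ∀ k < n, ∀ x ∈ C, v k x = max (φ k x) (∫ y, v (k + 1) y ∂((κ k) x))) :
    ∀ k ≤ n, ∀ x ∈ C, ∀ γ : ℝ, 0 < γ → γ ≤ 1 →
      v k (scale γ x) ≤ γ * v k x + Real.exp (-(r * t k)) * (1 - γ) * K := by
  subst hη hLa
  have hφineq : ∀ k ≤ n, ∀ x ∈ C, ∀ γ : ℝ, 0 < γ → γ ≤ 1 →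
      φ k (scale γ x) ≤ γ * φ k x + Real.exp (-(r * t k)) * (1 - γ) * K := by
    intro k hk x hx γ hγ hγ1
    have hxγ : scale γ x ∈ C := hC γ hγ x hx
    rw [hφdef k hk _ hxγ, hφdef k hk x hx, hαhom γ hγ x hx, hβhom γ hγ x hx]
    have hA : -1 * (γ * α x - γ * β x - K)
        = γ * (-1 * (α x - β x - K)) + (1 - γ) * K := by ring
    rw [hA]
    set A := -1 * (α x - β x - K) with hAdef
    have h1 : max (γ * A + (1 - γ) * K) 0 ≤ γ * max A 0 + (1 - γ) * K := by
      apply max_le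
      · have := le_max_left A 0; nlinarith
      · have := le_max_right A 0; nlinarith
    have he0 : (0:ℝ) ≤ Real.exp (-(r * t k)) := (Real.exp_pos _).le
    calc Real.exp (-(r * t k)) * max (γ * A + (1 - γ) * K) 0
        ≤ Real.exp (-(r * t k)) * (γ * max A 0 + (1 - γ) * K) :=
          mul_le_mul_of_nonneg_left h1 he0
      _ = γ * (Real.exp (-(r * t k)) * max A 0)
          + Real.exp (-(r * t k)) * (1 - γ) * K := by ring
  have hscont : ∀ γ : ℝ, Continuous (scale γ) := by
    intro γ
    have h : scale γ = fun x : StateSpace d₁ d₂ d₃ => (γ • x.1, x.2.1, γ • x.2.2) :=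
      funext (hscale γ)
    rw [h]; fun_prop
  have main : ∀ m k, k + m = n →
      (v k ∈ {ψ : StateSpace d₁ d₂ d₃ → ℝ | ContinuousOn ψ C ∧
        ∃ c > 0, ∀ x ∈ C, |ψ x| ≤ c * (1 + ‖x‖ ^ a)}) ∧
      ∀ x ∈ C, ∀ γ : ℝ, 0 < γ → γ ≤ 1 →
        v k (scale γ x) ≤ γ * v k x + Real.exp (-(r * t k)) * (1 - γ) * K := by
    intro m
    induction m with
    | zero =>
      intro k hk
      have hkn : k = n := by omega
      subst hkn
      obtain ⟨hφc, c, hc0, hφb⟩ := hφLa k le_rfl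
      refine ⟨⟨hφc.congr fun x hx => hvn x hx, c, hc0, fun x hx => by
        rw [hvn x hx]; exact hφb x hx⟩, ?_⟩
      intro x hx γ hγ hγ1
      rw [hvn _ (hC γ hγ x hx), hvn x hx]
      exact hφineq k le_rfl x hx γ hγ hγ1
    | succ m ih =>
      intro k hk
      have hkn : k < n := by omega
      obtain ⟨hLa1, hineq1⟩ := ih (k + 1) (by omega)
      have hgck := hgc k hkn (v (k + 1)) hLa1
      haveI := hκ k
      constructor
      · obtain ⟨hφc, cφ, hcφ, hφb⟩ := hφLa k hkn.le
        obtain ⟨hIc, cI, hcI, hIb⟩ := hgck.2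
        refine ⟨(hφc.sup hIc).congr fun x hx => hv k hkn x hx, cφ + cI, by positivity, ?_⟩
        intro x hx
        rw [hv k hkn x hx]
        have h1 := hφb x hx
        have h2 := hIb x hx
        calc |max (φ k x) (∫ y, v (k + 1) y ∂(κ k) x)|
            ≤ max |φ k x| |∫ y, v (k + 1) y ∂(κ k) x| := abs_max_le_max_abs_abs
          _ ≤ |φ k x| + |∫ y, v (k + 1) y ∂(κ k) x| :=
              max_le (le_add_of_nonneg_right (abs_nonneg _))
                (le_add_of_nonneg_left (abs_nonneg _))
          _ ≤ cφ * (1 + ‖x‖ ^ a) + cI * (1 + ‖x‖ ^ a) := add_le_add h1 h2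
          _ = (cφ + cI) * (1 + ‖x‖ ^ a) := by ring
      · intro x hx γ hγ hγ1
        have hxγ : scale γ x ∈ C := hC γ hγ x hx
        have hmeasγ : Measurable (scale γ) := (hscont γ).measurable
        have hmap := hκscale k hkn γ hγ x hx
        have hint2 : Integrable (v (k + 1)) ((κ k) (scale γ x)) := hgck.1 _ hxγ
        have hsm : AEStronglyMeasurable (v (k + 1)) (Measure.map (scale γ) ((κ k) x)) := by
          rw [hmap]; exact hint2.aestronglyMeasurable
        have hchg : ∫ y, v (k + 1) y ∂(κ k) (scale γ x)
            = ∫ y, v (k + 1) (scale γ y) ∂(κ k) x := by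
          rw [← hmap, integral_map hmeasγ.aemeasurable hsm]
        have hcomp : Integrable (fun y => v (k + 1) (scale γ y)) ((κ k) x) := by
          have := (integrable_map_measure hsm hmeasγ.aemeasurable).mp
            (by rw [hmap]; exact hint2)
          exact this
        have hintv : Integrable (v (k + 1)) ((κ k) x) := hgck.1 x hx
        have haeC : ∀ᵐ y ∂(κ k) x, y ∈ C := by
          rw [ae_iff]
          exact hκC k hkn x hx
        have hbound : ∀ᵐ y ∂(κ k) x, v (k + 1) (scale γ y)
            ≤ γ * v (k + 1) y + Real.exp (-(r * t (k + 1))) * (1 - γ) * K :=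
          haeC.mono fun y hy => hineq1 y hy γ hγ hγ1
        have hRHSint : Integrable (fun y => γ * v (k + 1) y
            + Real.exp (-(r * t (k + 1))) * (1 - γ) * K) ((κ k) x) :=
          (hintv.const_mul γ).add (integrable_const _)
        have hIle : ∫ y, v (k + 1) (scale γ y) ∂(κ k) x
            ≤ γ * (∫ y, v (k + 1) y ∂(κ k) x)
              + Real.exp (-(r * t (k + 1))) * (1 - γ) * K := by
          calc ∫ y, v (k + 1) (scale γ y) ∂(κ k) x
              ≤ ∫ y, (γ * v (k + 1) y
                + Real.exp (-(r * t (k + 1))) * (1 - γ) * K) ∂(κ k) x :=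
                integral_mono_ae hcomp hRHSint hbound
            _ = γ * (∫ y, v (k + 1) y ∂(κ k) x)
                + Real.exp (-(r * t (k + 1))) * (1 - γ) * K := by
                rw [integral_add (hintv.const_mul γ) (integrable_const _),
                  integral_const_mul, integral_const]
                simp
        have hek : Real.exp (-(r * t (k + 1))) ≤ Real.exp (-(r * t k)) := by
          apply Real.exp_le_exp.mpr
          have h := ht k hkn
          nlinarith
        have hγK : (0:ℝ) ≤ (1 - γ) * K := by nlinarith
        rw [hv k hkn _ hxγ, hv k hkn x hx, hchg]
        apply max_le
        · have h1 := hφineq k hkn.le x hx γ hγ hγ1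
          have h2 := le_max_left (φ k x) (∫ y, v (k + 1) y ∂(κ k) x)
          nlinarith
        · have h2 := le_max_right (φ k x) (∫ y, v (k + 1) y ∂(κ k) x)
          nlinarith
  intro k hk x hx γ hγ hγ1
  exact (main (n - k) k (by omega)).2 x hx γ hγ hγ1
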